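/- (C-regret via relaxation) Let 0 < C ≤ 1 and let F : X × Y → [0,1] satisfy C·f(x,y) ≤ F(x,y) ≤ f(x,y) for all x ∈ X and y ∈ Y. Suppose Γ is (κ,δ)-admissible with κ ≥ 1 and 0 < δ ≤ 1, let ε ≥ 0, set η = √(δ / ((1+2ε)Tκ)), let α = (α_1,…,α_N) have independent coordinates each uniformly distributed on [0, 1/η], and suppose that for every α the sequence x_1(α),…,x_{T+1}(α) is an ε-approximate Generalized-FTPL trajectory for α with respect to the payoff F (i.e., with F in place of f in the trajectory condition), with each map α ↦ x_t(α) measurable. Then E[ C·max_{x∈X} Σ_{t=1}^T f(x, y_t) − Σ_{t=1}^T f(x_t(α), y_t) ] ≤ 3N√((1+2ε)Tκ/δ) + εT. -/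

import Mathlib

open Finset MeasureTheory
open scoped ENNReal NNReal

lemma switch_cover_measure (E : Set ℝ) (R ρ : ℝ) (hρ : 0 ≤ ρ)
    (hsub : E ⊆ Set.Icc 0 R)
    (hprop : ∀ s ∈ E, (∀ s' ∈ E, s' ≤ s + ρ) ∨ (∀ s' ∈ E, s - ρ ≤ s')) :
    volume E ≤ ENNReal.ofReal (2 * ρ) := by
  rcases E.eq_empty_or_nonempty with rfl | hne
  · simp
  have hbb : BddBelow E := ⟨0, fun s hs => (hsub hs).1⟩
  have hba : BddAbove E := ⟨R, fun s hs => (hsub hs).2⟩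
  have hcov : E ⊆ Set.Icc (sInf E) (sInf E + ρ) ∪ Set.Icc (sSup E - ρ) (sSup E) := by
    intro s hs
    rcases hprop s hs with h | h
    · right
      have h1 : sSup E ≤ s + ρ := csSup_le hne h
      have h2 : s ≤ sSup E := le_csSup hba hs
      exact ⟨by linarith, h2⟩
    · left
      have h1 : s - ρ ≤ sInf E := le_csInf hne h
      have h2 : sInf E ≤ s := csInf_le hbb hs
      exact ⟨h2, by linarith⟩
  calc volume E ≤ volume (Set.Icc (sInf E) (sInf E + ρ) ∪ Set.Icc (sSup E - ρ) (sSup E)) :=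
        measure_mono hcov
    _ ≤ volume (Set.Icc (sInf E) (sInf E + ρ)) + volume (Set.Icc (sSup E - ρ) (sSup E)) :=
        measure_union_le _ _
    _ = ENNReal.ofReal ρ + ENNReal.ofReal ρ := by
        rw [Real.volume_Icc, Real.volume_Icc]; ring_nf
    _ = ENNReal.ofReal (2 * ρ) := by
        rw [← ENNReal.ofReal_add hρ hρ]; ring_nf

lemma sum_Icc_top (a b : ℕ) (h : a ≤ b + 1) (f : ℕ → ℝ) :
    ∑ τ ∈ Finset.Icc a (b+1), f τ = (∑ τ ∈ Finset.Icc a b, f τ) + f (b+1) := by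
  rw [← Finset.insert_Icc_right_eq_Icc_add_one h, Finset.sum_insert (by simp)]; ring

set_option maxHeartbeats 1000000 in
theorem c_regret_via_relaxation
    {X Y : Type*} [Fintype X] [Nonempty X]
    (f : X → Y → ℝ) (hf : ∀ x y, f x y ∈ Set.Icc (0:ℝ) 1)
    (C : ℝ) (hC0 : 0 < C) (hC1 : C ≤ 1)
    (F : X → Y → ℝ) (hF : ∀ x y, F x y ∈ Set.Icc (0:ℝ) 1)
    (hrelax : ∀ x y, C * f x y ≤ F x y ∧ F x y ≤ f x y)
    (T : ℕ) (hT : 1 ≤ T) (y : ℕ → Y)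
    (N : ℕ) (hN : 1 ≤ N)
    (Γ : X → Fin N → ℝ) (hΓ : ∀ x j, Γ x j ∈ Set.Icc (0:ℝ) 1)
    (κ : ℕ) (hκ : 1 ≤ κ) (δ : ℝ) (hδ0 : 0 < δ) (hδ1 : δ ≤ 1)
    -- (κ,δ)-admissibility of Γ:
    (hrows : ∀ x x' : X, x ≠ x' → ∃ j, Γ x j ≠ Γ x' j)
    (hcol : ∀ j : Fin N, (Finset.univ.image fun x => Γ x j).card ≤ κ)
    (hgap : ∀ (j : Fin N) (x x' : X), Γ x j ≠ Γ x' j → δ ≤ |Γ x j - Γ x' j|)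
    (ε : ℝ) (hε : 0 ≤ ε)
    (η : ℝ) (hη : η = Real.sqrt (δ / ((1 + 2*ε) * T * κ)))
    (D : Measure ℝ)
    (hD : D = ENNReal.ofReal η • volume.restrict (Set.Icc (0:ℝ) (1/η)))
    (xtraj : (Fin N → ℝ) → ℕ → X)
    (hmeas : ∀ (t : ℕ) (x₀ : X), MeasurableSet {α : Fin N → ℝ | xtraj α t = x₀})
    -- ε-approximate Generalized-FTPL trajectory with respect to F:
    (htraj : ∀ (α : Fin N → ℝ) (t : ℕ), 1 ≤ t → t ≤ T + 1 → ∀ x' : X,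
      (∑ τ ∈ Finset.Icc 1 (t-1), F (xtraj α t) (y τ)) + (∑ j, α j * Γ (xtraj α t) j) ≥
      (∑ τ ∈ Finset.Icc 1 (t-1), F x' (y τ)) + (∑ j, α j * Γ x' j) - ε) :
    ∫ α, (C * (Finset.univ.sup' Finset.univ_nonempty fun x => ∑ t ∈ Finset.Icc 1 T, f x (y t)) -
          ∑ t ∈ Finset.Icc 1 T, f (xtraj α t) (y t))
        ∂(Measure.pi fun _ : Fin N => D) ≤
      3 * N * Real.sqrt ((1 + 2*ε) * T * κ / δ) + ε * T := by
  -- basic positivity facts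
  have hQ' : (0:ℝ) < (1 + 2*ε) * T * κ := by
    have h1 : (0:ℝ) < 1 + 2*ε := by linarith
    have h2 : (0:ℝ) < (T:ℝ) := by exact_mod_cast hT
    have h3 : (0:ℝ) < (κ:ℝ) := by exact_mod_cast hκ
    positivity
  have hη0 : 0 < η := by
    rw [hη]; exact Real.sqrt_pos.2 (div_pos hδ0 hQ')
  set R : ℝ := 1/η with hRdef
  have hR0 : 0 < R := by positivity
  set ρ : ℝ := (1 + 2*ε)/δ with hρdef
  have hρ0 : 0 ≤ ρ := by positivity
  -- D is a probability measure
  have hDuniv : D Set.univ = 1 := by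
    rw [hD]
    simp only [Measure.smul_apply, smul_eq_mul, Measure.restrict_apply MeasurableSet.univ,
      Set.univ_inter, Real.volume_Icc]
    rw [sub_zero, ← ENNReal.ofReal_mul hη0.le, mul_one_div_cancel hη0.ne', ENNReal.ofReal_one]
  haveI hDprob : IsProbabilityMeasure D := ⟨hDuniv⟩
  set μ : Measure (Fin N → ℝ) := Measure.pi fun _ : Fin N => D with hμdef
  haveI hμprob : IsProbabilityMeasure μ := by
    rw [hμdef]; infer_instance
  -- the switching events
  set A : ℕ → Fin N → Set (Fin N → ℝ) :=
    fun t j => {α | Γ (xtraj α t) j ≠ Γ (xtraj α (t+1)) j} with hAdef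
  have hA_meas : ∀ t j, MeasurableSet (A t j) := by
    intro t j
    have : A t j = ⋃ (x₀ : X) (x₁ : X) (_ : Γ x₀ j ≠ Γ x₁ j),
        ({α | xtraj α t = x₀} ∩ {α | xtraj α (t+1) = x₁}) := by
      ext α
      simp only [hAdef, Set.mem_setOf_eq, Set.mem_iUnion, Set.mem_inter_iff]
      constructor
      · intro h; exact ⟨xtraj α t, xtraj α (t+1), h, rfl, rfl⟩
      · rintro ⟨x₀, x₁, hne, h0, h1⟩; rw [h0, h1]; exact hne
    rw [this]
    exact MeasurableSet.iUnion fun x₀ => MeasurableSet.iUnion fun x₁ =>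
      MeasurableSet.iUnion fun _ => (hmeas t x₀).inter (hmeas (t+1) x₁)
  -- splitting the perturbation sum at coordinate j
  have hsum : ∀ (α : Fin N → ℝ) (j : Fin N) (s : ℝ) (x : X),
      ∑ i, (Function.update α j s) i * Γ x i
        = s * Γ x j + ∑ i ∈ Finset.univ.erase j, α i * Γ x i := by
    intro α j s x
    rw [← Finset.add_sum_erase _ (fun i => (Function.update α j s) i * Γ x i) (Finset.mem_univ j)]
    congr 1
    · rw [Function.update_self]
    · exact Finset.sum_congr rfl fun i hi => by
        rw [Function.update_of_ne (Finset.ne_of_mem_erase hi)]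
  -- key pairwise inequality
  have key : ∀ (α : Fin N → ℝ) (j : Fin N) (t : ℕ), 1 ≤ t → t ≤ T → ∀ s s' : ℝ,
      Γ (xtraj (Function.update α j s') t) j = Γ (xtraj (Function.update α j s) t) j →
      (s' - s) * (Γ (xtraj (Function.update α j s) (t+1)) j
          - Γ (xtraj (Function.update α j s) t) j) ≤ 1 + 2*ε := by
    intro α j t ht1 ht2 s s' hvv
    obtain ⟨u, rfl⟩ : ∃ u, t = u + 1 := ⟨t - 1, (Nat.succ_pred_eq_of_pos ht1).symm⟩
    set β : Fin N → ℝ := Function.update α j s with hβ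
    set β' : Fin N → ℝ := Function.update α j s' with hβ'
    set x' : X := xtraj β' (u+1) with hx'
    set z : X := xtraj β (u+2) with hz
    have h1 := htraj β' (u+1) (by omega) (by omega) z
    have h2 := htraj β (u+2) (by omega) (by omega) x'
    simp only [Nat.add_sub_cancel, show u+2-1 = u+1 from rfl] at h1 h2
    rw [hsum α j s' x', hsum α j s' z] at h1
    rw [hsum α j s z, hsum α j s x', ← hz] at h2
    rw [sum_Icc_top 1 u (by omega) (fun τ => F z (y τ)),
        sum_Icc_top 1 u (by omega) (fun τ => F x' (y τ))] at h2
    have hFz := hF z (y (u+1))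
    have hFx' := hF x' (y (u+1))
    simp only [Set.mem_Icc] at hFz hFx'
    rw [← hvv]
    nlinarith [h1, h2, hFz.1, hFz.2, hFx'.1, hFx'.2]
  -- the one-dimensional slice bound
  have slice : ∀ (α : Fin N → ℝ) (j : Fin N) (t : ℕ), 1 ≤ t → t ≤ T →
      D {s : ℝ | Function.update α j s ∈ A t j} ≤ ENNReal.ofReal (η * (κ * (2 * ρ))) := by
    intro α j t ht1 ht2
    have hDS : D {s : ℝ | Function.update α j s ∈ A t j}
        = ENNReal.ofReal η * volume ({s : ℝ | Function.update α j s ∈ A t j} ∩ Set.Icc 0 R) := by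
      rw [hD]
      simp [Measure.smul_apply, Measure.restrict_apply' measurableSet_Icc]
    set vals := Finset.univ.image (fun x => Γ x j) with hvals
    set E : ℝ → Set ℝ := fun v => {s : ℝ | s ∈ Set.Icc 0 R ∧
        Γ (xtraj (Function.update α j s) t) j = v ∧
        Γ (xtraj (Function.update α j s) (t+1)) j ≠ v} with hE
    have hcover : {s : ℝ | Function.update α j s ∈ A t j} ∩ Set.Icc 0 R ⊆ ⋃ v ∈ vals, E v := by
      rintro s ⟨hsA, hsI⟩
      exact Set.mem_biUnion
        (Finset.mem_image_of_mem _ (Finset.mem_univ (xtraj (Function.update α j s) t)))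
        ⟨hsI, rfl, fun h => hsA h.symm⟩
    have hEv : ∀ v : ℝ, volume (E v) ≤ ENNReal.ofReal (2*ρ) := by
      intro v
      apply switch_cover_measure _ R ρ hρ0 (fun s hs => hs.1)
      intro s hs
      obtain ⟨hsI, hv, hw⟩ := hs
      have hne : Γ (xtraj (Function.update α j s) (t+1)) j
          ≠ Γ (xtraj (Function.update α j s) t) j := by rw [hv]; exact hw
      have hd : δ ≤ |Γ (xtraj (Function.update α j s) (t+1)) j
          - Γ (xtraj (Function.update α j s) t) j| := hgap j _ _ hne
      have hkey : ∀ s' ∈ E v, (s' - s) * (Γ (xtraj (Function.update α j s) (t+1)) j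
          - Γ (xtraj (Function.update α j s) t) j) ≤ 1 + 2*ε := by
        intro s' hs'
        exact key α j t ht1 ht2 s s' (hs'.2.1.trans hv.symm)
      rcases lt_or_gt_of_ne hne with hlt | hgt
      · -- value decreases: everyone in E v is ≥ s - ρ
        right
        intro s' hs'
        have hd' : δ ≤ Γ (xtraj (Function.update α j s) t) j
            - Γ (xtraj (Function.update α j s) (t+1)) j := by
          rw [abs_of_neg (by linarith)] at hd; linarith
        have hk := hkey s' hs'
        rcases le_or_gt s s' with h0 | h0
        · linarith
        · rw [hρdef]
          have h2 : (s - s') * δ ≤ 1 + 2*ε := by nlinarith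
          have h3 : s - s' ≤ (1 + 2*ε)/δ := (le_div_iff₀ hδ0).2 h2
          linarith
      · -- value increases: everyone in E v is ≤ s + ρ
        left
        intro s' hs'
        have hd' : δ ≤ Γ (xtraj (Function.update α j s) (t+1)) j
            - Γ (xtraj (Function.update α j s) t) j := by
          rwa [abs_of_pos (by linarith)] at hd
        have hk := hkey s' hs'
        rcases le_or_gt s' s with h0 | h0
        · linarith
        · rw [hρdef]
          have h2 : (s' - s) * δ ≤ 1 + 2*ε := by nlinarith
          have h3 : s' - s ≤ (1 + 2*ε)/δ := (le_div_iff₀ hδ0).2 h2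
          linarith
    have hvol : volume ({s : ℝ | Function.update α j s ∈ A t j} ∩ Set.Icc 0 R)
        ≤ (κ : ℝ≥0∞) * ENNReal.ofReal (2*ρ) := by
      calc volume ({s : ℝ | Function.update α j s ∈ A t j} ∩ Set.Icc 0 R)
          ≤ volume (⋃ v ∈ vals, E v) := measure_mono hcover
        _ ≤ ∑ v ∈ vals, volume (E v) := measure_biUnion_finset_le _ _
        _ ≤ ∑ v ∈ vals, ENNReal.ofReal (2*ρ) := Finset.sum_le_sum fun v _ => hEv v
        _ = (vals.card : ℝ≥0∞) * ENNReal.ofReal (2*ρ) := by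
            rw [Finset.sum_const, nsmul_eq_mul]
        _ ≤ (κ : ℝ≥0∞) * ENNReal.ofReal (2*ρ) := by
            exact mul_le_mul_left (by exact_mod_cast hcol j) _
    rw [hDS]
    calc ENNReal.ofReal η * volume ({s : ℝ | Function.update α j s ∈ A t j} ∩ Set.Icc 0 R)
        ≤ ENNReal.ofReal η * ((κ : ℝ≥0∞) * ENNReal.ofReal (2*ρ)) := mul_le_mul_right hvol _
      _ = ENNReal.ofReal (η * (κ * (2 * ρ))) := by
          rw [ENNReal.ofReal_mul hη0.le, ENNReal.ofReal_mul (by positivity : (0:ℝ) ≤ (κ:ℝ)),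
            ENNReal.ofReal_natCast]
  -- the event probability bound
  have hAbound : ∀ (t : ℕ), 1 ≤ t → t ≤ T → ∀ j,
      μ (A t j) ≤ ENNReal.ofReal (η * (κ * (2 * ρ))) := by
    intro t ht1 ht2 j
    classical
    set c : ℝ≥0∞ := ENNReal.ofReal (η * (κ * (2 * ρ))) with hc
    set indA : (Fin N → ℝ) → ℝ≥0∞ := (A t j).indicator 1 with hindA
    have hindmeas : Measurable indA := measurable_one.indicator (hA_meas t j)
    have h1 : μ (A t j) = ∫⁻ α, indA α ∂μ := (lintegral_indicator_one (hA_meas t j)).symm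
    have hconst : ∀ (srest : Finset (Fin N)) (x₀ : Fin N → ℝ),
        (∫⋯∫⁻_srest, (fun _ => c) ∂(fun _ => D)) x₀ = c := by
      intro srest x₀
      rw [lmarginal, lintegral_const, measure_univ, mul_one]
    have hpt : (fun x => ∫⁻ s, indA (Function.update x j s) ∂D) ≤ fun _ => c := by
      intro x
      show (∫⁻ s, indA (Function.update x j s) ∂D) ≤ c
      have heq : (fun s => indA (Function.update x j s))
          = (Function.update x j ⁻¹' (A t j)).indicator 1 := by
        funext s
        by_cases h : Function.update x j s ∈ A t j <;>
          simp [hindA, Set.indicator_apply, h]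
      have hDeq : ∫⁻ s, indA (Function.update x j s) ∂D
          = D (Function.update x j ⁻¹' (A t j)) := by
        rw [show (fun s => indA (Function.update x j s))
            = (Function.update x j ⁻¹' (A t j)).indicator 1 from heq]
        exact lintegral_indicator_one ((hA_meas t j).preimage (measurable_update x))
      rw [hDeq]
      exact slice x j t ht1 ht2
    rw [h1, hμdef, lintegral_eq_lmarginal_univ (fun _ => (0:ℝ)),
      lmarginal_erase' _ hindmeas (Finset.mem_univ j)]
    calc (∫⋯∫⁻_(Finset.univ.erase j),
            (fun x => ∫⁻ s, indA (Function.update x j s) ∂D) ∂(fun _ => D)) (fun _ => (0:ℝ))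
        ≤ (∫⋯∫⁻_(Finset.univ.erase j), (fun _ => c) ∂(fun _ => D)) (fun _ => (0:ℝ)) :=
          lmarginal_mono hpt _
      _ = c := hconst _ _
  -- pointwise (per-α) regret bound on the support box
  have pointwise : ∀ α : Fin N → ℝ, (∀ i, α i ∈ Set.Icc (0:ℝ) R) →
      (C * (Finset.univ.sup' Finset.univ_nonempty fun x => ∑ t ∈ Finset.Icc 1 T, f x (y t)) -
          ∑ t ∈ Finset.Icc 1 T, f (xtraj α t) (y t)) ≤
      (N/η + T*ε) + ∑ t ∈ Finset.Icc 1 T, ∑ j, (A t j).indicator (fun _ => (1:ℝ)) α := by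
    intro α hbox
    have hΦ0 : ∀ x : X, 0 ≤ ∑ j, α j * Γ x j :=
      fun x => Finset.sum_nonneg fun j _ => mul_nonneg (hbox j).1 (hΓ x j).1
    have hΦub : ∀ x : X, (∑ j, α j * Γ x j) ≤ N / η := by
      intro x
      calc (∑ j, α j * Γ x j) ≤ ∑ _j : Fin N, (1/η : ℝ) := by
            refine Finset.sum_le_sum fun j _ => ?_
            have h1 := (hbox j).1
            have h2 := (hbox j).2
            have h3 := (hΓ x j).1
            have h4 := (hΓ x j).2
            rw [hRdef] at h2
            nlinarith
        _ = N * (1/η) := by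
            rw [Finset.sum_const, Finset.card_univ, Fintype.card_fin, nsmul_eq_mul]
        _ = N / η := by ring
    have H : ∀ u, u ≤ T → ∀ x' : X,
        (∑ τ ∈ Finset.Icc 1 u, F (xtraj α (u+1)) (y τ)) + (∑ j, α j * Γ (xtraj α (u+1)) j) ≥
        (∑ τ ∈ Finset.Icc 1 u, F x' (y τ)) + (∑ j, α j * Γ x' j) - ε := by
      intro u hu x'
      have h := htraj α (u+1) (by omega) (by omega) x'
      simpa [Nat.add_sub_cancel] using h
    have BTL : ∀ t, 1 ≤ t → t ≤ T →
        (∑ τ ∈ Finset.Icc 1 t, F (xtraj α (τ+1)) (y τ)) + (∑ j, α j * Γ (xtraj α 2) j) ≥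
        (∑ τ ∈ Finset.Icc 1 t, F (xtraj α (t+1)) (y τ)) + (∑ j, α j * Γ (xtraj α (t+1)) j)
          - ((t:ℝ) - 1) * ε := by
      intro t ht1
      induction t, ht1 using Nat.le_induction with
      | base =>
        intro _
        simp only [Finset.Icc_self, Finset.sum_singleton]
        norm_num
      | succ t ht IH =>
        intro htT
        have htT' : t ≤ T := by omega
        have hIH := IH htT'
        have hH := H t htT' (xtraj α (t+1+1))
        rw [sum_Icc_top 1 t (by omega) (fun τ => F (xtraj α (τ+1)) (y τ)),
            sum_Icc_top 1 t (by omega) (fun τ => F (xtraj α (t+1+1)) (y τ))]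
        push_cast
        linarith
    have hfinal : ∀ x : X, (∑ τ ∈ Finset.Icc 1 T, F x (y τ)) ≤
        (∑ τ ∈ Finset.Icc 1 T, F (xtraj α (τ+1)) (y τ)) + N/η + T*ε := by
      intro x
      have h1 := BTL T hT le_rfl
      have h2 := H T le_rfl x
      have h3 := hΦ0 x
      have h4 := hΦub (xtraj α 2)
      have hT1 : (1:ℝ) ≤ (T:ℝ) := by exact_mod_cast hT
      linarith [h1, h2, h3, h4, hε]
    obtain ⟨xstar, hxmem, hxeq⟩ := Finset.exists_mem_eq_sup' Finset.univ_nonempty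
      (fun x => ∑ t ∈ Finset.Icc 1 T, f x (y t))
    have hCmax : C * (Finset.univ.sup' Finset.univ_nonempty
        fun x => ∑ t ∈ Finset.Icc 1 T, f x (y t)) ≤ ∑ t ∈ Finset.Icc 1 T, F xstar (y t) := by
      rw [hxeq, Finset.mul_sum]
      exact Finset.sum_le_sum fun t _ => (hrelax xstar (y t)).1
    have hlow : ∑ t ∈ Finset.Icc 1 T, F (xtraj α t) (y t)
        ≤ ∑ t ∈ Finset.Icc 1 T, f (xtraj α t) (y t) :=
      Finset.sum_le_sum fun t _ => (hrelax _ (y t)).2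
    have hstab : ∀ t ∈ Finset.Icc 1 T,
        F (xtraj α (t+1)) (y t) - F (xtraj α t) (y t)
          ≤ ∑ j, (A t j).indicator (fun _ => (1:ℝ)) α := by
      intro t _
      by_cases hxx : xtraj α t = xtraj α (t+1)
      · rw [hxx, sub_self]
        exact Finset.sum_nonneg fun j _ => Set.indicator_nonneg (fun _ _ => zero_le_one) _
      · obtain ⟨j₀, hj₀⟩ := hrows _ _ hxx
        have hj0mem : α ∈ A t j₀ := hj₀
        have h1 : (1:ℝ) ≤ ∑ j, (A t j).indicator (fun _ => (1:ℝ)) α := by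
          have heq1 : (A t j₀).indicator (fun _ => (1:ℝ)) α = 1 := Set.indicator_of_mem hj0mem _
          calc (1:ℝ) = (A t j₀).indicator (fun _ => (1:ℝ)) α := heq1.symm
            _ ≤ ∑ j, (A t j).indicator (fun _ => (1:ℝ)) α :=
              Finset.single_le_sum
                (fun j _ => Set.indicator_nonneg (fun _ _ => zero_le_one) _) (Finset.mem_univ j₀)
        have hFb1 := hF (xtraj α (t+1)) (y t)
        have hFb2 := hF (xtraj α t) (y t)
        simp only [Set.mem_Icc] at hFb1 hFb2
        linarith
    have hsplit : (∑ t ∈ Finset.Icc 1 T, F (xtraj α (t+1)) (y t))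
          - ∑ t ∈ Finset.Icc 1 T, F (xtraj α t) (y t)
        ≤ ∑ t ∈ Finset.Icc 1 T, ∑ j, (A t j).indicator (fun _ => (1:ℝ)) α := by
      rw [← Finset.sum_sub_distrib]
      exact Finset.sum_le_sum hstab
    have h5 := hfinal xstar
    linarith [hCmax, hlow, hsplit, h5]
  -- integrability
  have hc0 : (0:ℝ) ≤ η*(κ*(2*ρ)) :=
    mul_nonneg hη0.le (mul_nonneg (Nat.cast_nonneg κ) (mul_nonneg (by norm_num) hρ0))
  have hind_int : ∀ t j, Integrable ((A t j).indicator (fun _ => (1:ℝ))) μ :=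
    fun t j => (integrable_const (1:ℝ)).indicator (hA_meas t j)
  have hsum_int : Integrable
      (fun β => ∑ t ∈ Finset.Icc 1 T, ∑ j, (A t j).indicator (fun _ => (1:ℝ)) β) μ := by
    apply integrable_finset_sum
    intro t _
    apply integrable_finset_sum
    intro j _
    exact hind_int t j
  have hf_int : ∀ t : ℕ, Integrable (fun β => f (xtraj β t) (y t)) μ := by
    intro t
    have hrep : (fun β : Fin N → ℝ => f (xtraj β t) (y t))
        = fun β => ∑ x₀ : X, ({β : Fin N → ℝ | xtraj β t = x₀}).indicator
            (fun _ => f x₀ (y t)) β := by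
      funext β
      rw [Finset.sum_eq_single (xtraj β t)]
      · simp
      · intro x₀ _ hne
        apply Set.indicator_of_notMem
        exact fun h => hne (Eq.symm h)
      · intro h
        exact absurd (Finset.mem_univ _) h
    rw [hrep]
    exact integrable_finset_sum _ fun x₀ _ => (integrable_const _).indicator (hmeas t x₀)
  have hG_int : Integrable (fun β : Fin N → ℝ =>
      C * (Finset.univ.sup' Finset.univ_nonempty fun x => ∑ t ∈ Finset.Icc 1 T, f x (y t)) -
        ∑ t ∈ Finset.Icc 1 T, f (xtraj β t) (y t)) μ :=
    (integrable_const _).sub (integrable_finset_sum _ fun t _ => hf_int t)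
  have hg_int : Integrable (fun β : Fin N → ℝ =>
      (N/η + T*ε) + ∑ t ∈ Finset.Icc 1 T, ∑ j, (A t j).indicator (fun _ => (1:ℝ)) β) μ :=
    (integrable_const _).add hsum_int
  -- the support box has full measure
  have hbox_ae : ∀ᵐ β ∂μ, ∀ i, β i ∈ Set.Icc (0:ℝ) R := by
    have hBmeas : MeasurableSet (Set.pi Set.univ fun _ : Fin N => Set.Icc (0:ℝ) R) :=
      MeasurableSet.univ_pi fun _ => measurableSet_Icc
    have hDIcc : D (Set.Icc (0:ℝ) R) = 1 := by
      rw [hD]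
      simp only [Measure.smul_apply, smul_eq_mul,
        Measure.restrict_apply' measurableSet_Icc, Set.inter_self, Real.volume_Icc]
      rw [sub_zero, ← ENNReal.ofReal_mul hη0.le, hRdef, mul_one_div_cancel hη0.ne',
        ENNReal.ofReal_one]
    have hBfull : μ (Set.pi Set.univ fun _ : Fin N => Set.Icc (0:ℝ) R) = 1 := by
      rw [hμdef, Measure.pi_pi]
      simp [hDIcc]
    have hcompl : μ (Set.pi Set.univ fun _ : Fin N => Set.Icc (0:ℝ) R)ᶜ = 0 := by
      rw [measure_compl hBmeas (measure_ne_top μ _), hBfull, measure_univ, tsub_self]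
    rw [ae_iff]
    refine measure_mono_null ?_ hcompl
    intro β hβ
    simp only [Set.mem_setOf_eq] at hβ
    simp only [Set.mem_compl_iff, Set.mem_univ_pi]
    push_neg at hβ ⊢
    exact hβ
  have hle : (fun β : Fin N → ℝ =>
      C * (Finset.univ.sup' Finset.univ_nonempty fun x => ∑ t ∈ Finset.Icc 1 T, f x (y t)) -
        ∑ t ∈ Finset.Icc 1 T, f (xtraj β t) (y t)) ≤ᵐ[μ]
      (fun β => (N/η + T*ε) + ∑ t ∈ Finset.Icc 1 T, ∑ j,
        (A t j).indicator (fun _ => (1:ℝ)) β) := by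
    filter_upwards [hbox_ae] with β hβ using pointwise β hβ
  -- the arithmetic identity
  have harith : N/η + T*ε + T*(N*(η*(κ*(2*ρ))))
      ≤ 3 * N * Real.sqrt ((1 + 2*ε) * T * κ / δ) + ε * T := by
    have hQ : (0:ℝ) < (1+2*ε)*T*κ/δ := div_pos hQ' hδ0
    set q := Real.sqrt ((1+2*ε)*T*κ/δ) with hq
    have hq0 : 0 < q := Real.sqrt_pos.2 hQ
    have hqq : q*q = (1+2*ε)*T*κ/δ := Real.mul_self_sqrt hQ.le
    have hηq : η * q = 1 := by
      rw [hη, hq, ← Real.sqrt_mul (by positivity) _]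
      have heq2 : δ / ((1+2*ε)*T*κ) * ((1+2*ε)*T*κ/δ) = 1 := by
        field_simp
      rw [heq2, Real.sqrt_one]
    have e1 : (N:ℝ)/η = N*q := by
      rw [div_eq_iff hη0.ne']
      linear_combination (-(N:ℝ)) * hηq
    have e2 : η*((1+2*ε)*(T:ℝ)*κ/δ) = q := by
      rw [← hqq, ← mul_assoc, hηq, one_mul]
    have e3 : (T:ℝ)*(N*(η*(κ*(2*ρ)))) = 2*N*q := by
      rw [hρdef]
      linear_combination (-2*(N:ℝ)*η)*hqq + (2*(N:ℝ)*q)*hηq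
    linarith [e1, e3]
  -- put everything together
  calc ∫ β, (C * (Finset.univ.sup' Finset.univ_nonempty
          fun x => ∑ t ∈ Finset.Icc 1 T, f x (y t)) -
        ∑ t ∈ Finset.Icc 1 T, f (xtraj β t) (y t)) ∂μ
      ≤ ∫ β, ((N/η + T*ε) + ∑ t ∈ Finset.Icc 1 T, ∑ j,
          (A t j).indicator (fun _ => (1:ℝ)) β) ∂μ := integral_mono_ae hG_int hg_int hle
    _ = (N/η + T*ε) + ∑ t ∈ Finset.Icc 1 T, ∑ j, (μ (A t j)).toReal := by
        rw [integral_add (integrable_const _) hsum_int, integral_const, probReal_univ]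
        simp only [ENNReal.toReal_one, one_smul]
        congr 1
        rw [integral_finset_sum _ (fun t _ => integrable_finset_sum _ fun j _ => hind_int t j)]
        refine Finset.sum_congr rfl fun t _ => ?_
        rw [integral_finset_sum _ (fun j _ => hind_int t j)]
        refine Finset.sum_congr rfl fun j _ => ?_
        rw [integral_indicator_const (1:ℝ) (hA_meas t j), smul_eq_mul, mul_one, Measure.real]
    _ ≤ (N/η + T*ε) + T*(N*(η*(κ*(2*ρ)))) := by
        have hbd : ∀ t ∈ Finset.Icc 1 T,
            ∑ j, (μ (A t j)).toReal ≤ N*(η*(κ*(2*ρ))) := by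
          intro t htmem
          obtain ⟨ht1, ht2⟩ := Finset.mem_Icc.1 htmem
          calc ∑ j, (μ (A t j)).toReal
              ≤ ∑ _j : Fin N, η*(κ*(2*ρ)) := Finset.sum_le_sum fun j _ =>
                ENNReal.toReal_le_of_le_ofReal hc0 (hAbound t ht1 ht2 j)
            _ = N*(η*(κ*(2*ρ))) := by
                rw [Finset.sum_const, Finset.card_univ, Fintype.card_fin, nsmul_eq_mul]
        have hsb : ∑ t ∈ Finset.Icc 1 T, ∑ j, (μ (A t j)).toReal
            ≤ (Finset.Icc 1 T).card • (N*(η*(κ*(2*ρ)))) :=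
          Finset.sum_le_card_nsmul _ _ _ hbd
        rw [Nat.card_Icc] at hsb
        simp only [Nat.add_sub_cancel, nsmul_eq_mul] at hsb
        linarith
    _ ≤ 3 * N * Real.sqrt ((1 + 2*ε) * T * κ / δ) + ε * T := by
        have : N/η + T*ε + T*(N*(η*(κ*(2*ρ)))) = (N/η + T*ε) + T*(N*(η*(κ*(2*ρ)))) := by ring
        linarith [harith]
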